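/- If every injective right R-module has finite flat dimension, then every complete projective resolution of left R-modules is a complete flat resolution; i.e., for every exact sequence P of projective left R-modules with Hom_R(P, Q) exact for all projective Q, the complex I ⊗_R P is exact for every injective right R-module I. -/

import Mathlib

open CategoryTheory

universe u

variable (R : Type u) [CommRing R]

/-- A (doubly infinite) complex of `R`-modules, as a `ℤ`-indexed family of modules
with differentials of degree `+1`. -/
structure ModuleComplex where
  X : ℤ → Type u
  [acg : ∀ n, AddCommGroup (X n)]
  [mod : ∀ n, Module R (X n)]
  d : ∀ n : ℤ, X n →ₗ[R] X (n + 1)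
  comp_eq_zero : ∀ n : ℤ, (d (n + 1)).comp (d n) = 0

attribute [instance] ModuleComplex.acg ModuleComplex.mod

namespace ModuleComplex

variable {R}

/-- The complex is exact. -/
def Exact (C : ModuleComplex R) : Prop :=
  ∀ n : ℤ, LinearMap.range (C.d n) = LinearMap.ker (C.d (n + 1))

/-- The complex `I ⊗_R C` is exact. -/
def TensorExact (C : ModuleComplex R) (I : Type u) [AddCommGroup I] [Module R I] : Prop :=
  ∀ n : ℤ, LinearMap.range (LinearMap.lTensor I (C.d n))
    = LinearMap.ker (LinearMap.lTensor I (C.d (n + 1)))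

/-- The complex `Hom_R(C, Q)` is exact. -/
def HomExact (C : ModuleComplex R) (Q : Type u) [AddCommGroup Q] [Module R Q] : Prop :=
  ∀ (n : ℤ) (f : C.X (n + 1) →ₗ[R] Q), f.comp (C.d n) = 0 →
    ∃ g : C.X (n + 1 + 1) →ₗ[R] Q, g.comp (C.d (n + 1)) = f

end ModuleComplex

/-- A complete flat resolution: an exact complex of flat modules that remains exact
after tensoring with any injective module. -/
def IsCompleteFlatResolution (C : ModuleComplex R) : Prop :=
  (∀ n, Module.Flat R (C.X n)) ∧ C.Exact ∧
    ∀ (I : Type u) [AddCommGroup I] [Module R I], Module.Injective R I → C.TensorExact I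

/-- A complete projective resolution: an exact complex of projective modules such that
`Hom_R(-, Q)` leaves it exact for every projective module `Q`. -/
def IsCompleteProjectiveResolution (C : ModuleComplex R) : Prop :=
  (∀ n, Module.Projective R (C.X n)) ∧ C.Exact ∧
    ∀ (Q : Type u) [AddCommGroup Q] [Module R Q], Module.Projective R Q → C.HomExact Q

/-- A Gorenstein flat module: a cokernel of a middle map of a complete flat resolution. -/
def IsGorensteinFlat (M : Type u) [AddCommGroup M] [Module R M] : Prop :=
  ∃ C : ModuleComplex R, IsCompleteFlatResolution R C ∧
    Nonempty (M ≃ₗ[R] LinearMap.range (C.d 0))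

/-- A Gorenstein projective module. -/
def IsGorensteinProjective (M : Type u) [AddCommGroup M] [Module R M] : Prop :=
  ∃ C : ModuleComplex R, IsCompleteProjectiveResolution R C ∧
    Nonempty (M ≃ₗ[R] LinearMap.range (C.d 0))

/-- `ResDimLE P n M` : `M` admits a length-`n` left resolution by modules satisfying `P`. -/
def ResDimLE (P : ∀ (N : Type u) [AddCommGroup N] [Module R N], Prop) :
    ℕ → ∀ (M : Type u) [AddCommGroup M] [Module R M], Prop :=
  Nat.rec (motive := fun _ => ∀ (M : Type u) [AddCommGroup M] [Module R M], Prop)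
    (fun M _ _ => P M)
    (fun _ ih M _ _ => ∃ (G : Type u) (_ : AddCommGroup G) (_ : Module R G)
      (f : G →ₗ[R] M), P G ∧ Function.Surjective f ∧ ih (LinearMap.ker f))

/-- `CoresDimLE P n M` : `M` admits a length-`n` right resolution by modules satisfying `P`. -/
def CoresDimLE (P : ∀ (N : Type u) [AddCommGroup N] [Module R N], Prop) :
    ℕ → ∀ (M : Type u) [AddCommGroup M] [Module R M], Prop :=
  Nat.rec (motive := fun _ => ∀ (M : Type u) [AddCommGroup M] [Module R M], Prop)
    (fun M _ _ => P M)
    (fun _ ih M _ _ => ∃ (I : Type u) (_ : AddCommGroup I) (_ : Module R I)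
      (f : M →ₗ[R] I), P I ∧ Function.Injective f ∧ ih (I ⧸ LinearMap.range f))

/-- Flat dimension. -/
noncomputable def flatDim (M : Type u) [AddCommGroup M] [Module R M] : ℕ∞ :=
  sInf {n : ℕ∞ | ∃ m : ℕ, n = m ∧ ResDimLE R (fun N _ _ => Module.Flat R N) m M}

/-- Injective dimension. -/
noncomputable def injDim (M : Type u) [AddCommGroup M] [Module R M] : ℕ∞ :=
  sInf {n : ℕ∞ | ∃ m : ℕ, n = m ∧ CoresDimLE R (fun N _ _ => Module.Injective R N) m M}

/-- Gorenstein flat dimension. -/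
noncomputable def gorensteinFlatDim (M : Type u) [AddCommGroup M] [Module R M] : ℕ∞ :=
  sInf {n : ℕ∞ | ∃ m : ℕ, n = m ∧ ResDimLE R (fun N _ _ => IsGorensteinFlat R N) m M}

/-- Gorenstein projective dimension. -/
noncomputable def gorensteinProjDim (M : Type u) [AddCommGroup M] [Module R M] : ℕ∞ :=
  sInf {n : ℕ∞ | ∃ m : ℕ, n = m ∧ ResDimLE R (fun N _ _ => IsGorensteinProjective R N) m M}

/-- `Tor_n^R(N, M)` as a module. -/
noncomputable def TorMod (n : ℕ) (N M : Type u) [AddCommGroup N] [Module R N]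
    [AddCommGroup M] [Module R M] : ModuleCat.{u} R :=
  ((Tor (ModuleCat.{u} R) n).obj (ModuleCat.of R N)).obj (ModuleCat.of R M)

/-- The copure flat dimension: the largest `n` with `Tor_n(E, M) ≠ 0`
for some injective module `E`. -/
noncomputable def copureFlatDim (M : Type u) [AddCommGroup M] [Module R M] : ℕ∞ :=
  sSup {n : ℕ∞ | ∃ m : ℕ, n = m ∧ ∃ (E : Type u) (_ : AddCommGroup E) (_ : Module R E),
    Module.Injective R E ∧ Nontrivial (TorMod R m E M)}

/-- `Ext^n_R(M, N)` as a module. -/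
noncomputable def ExtMod (n : ℕ) (M N : Type u) [AddCommGroup M] [Module R M]
    [AddCommGroup N] [Module R N] : ModuleCat.{u} R :=
  ((Ext R (ModuleCat.{u} R) n).obj (Opposite.op (ModuleCat.of R M))).obj (ModuleCat.of R N)

/-- `M` is infinitely presented: it admits a resolution by finitely generated
free modules. -/
def InfinitelyPresented (M : Type u) [AddCommGroup M] [Module R M] : Prop :=
  ∃ (F : ℕ → ModuleCat.{u} R) (d : ∀ n, F (n + 1) →ₗ[R] F n) (ε : (F 0 : Type u) →ₗ[R] M),
    (∀ n, Module.Free R (F n) ∧ Module.Finite R (F n)) ∧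
    Function.Surjective ε ∧ LinearMap.ker ε = LinearMap.range (d 0) ∧
    ∀ n, LinearMap.ker (d n) = LinearMap.range (d (n + 1))


private lemma comm_aux {R : Type u} [CommRing R] (C : ModuleComplex R)
    {A B : Type u} [AddCommGroup A] [AddCommGroup B] [Module R A] [Module R B]
    (g : A →ₗ[R] B) (j : ℤ) (z : TensorProduct R A (C.X j)) :
    LinearMap.lTensor B (C.d j) (LinearMap.rTensor (C.X j) g z)
      = LinearMap.rTensor (C.X (j + 1)) g (LinearMap.lTensor A (C.d j) z) := by
  rw [← LinearMap.comp_apply, ← LinearMap.comp_apply,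
      LinearMap.lTensor_comp_rTensor, LinearMap.rTensor_comp_lTensor]

private lemma dd_aux {R : Type u} [CommRing R] (C : ModuleComplex R)
    (A : Type u) [AddCommGroup A] [Module R A]
    (j : ℤ) (w : TensorProduct R A (C.X j)) :
    LinearMap.lTensor A (C.d (j + 1)) (LinearMap.lTensor A (C.d j) w) = 0 := by
  rw [← LinearMap.comp_apply, ← LinearMap.lTensor_comp, C.comp_eq_zero,
    LinearMap.lTensor_zero, LinearMap.zero_apply]

private lemma flat_tensorExact {R : Type u} [CommRing R] (C : ModuleComplex R)
    (hex : C.Exact) (I : Type u) [AddCommGroup I] [Module R I] [Module.Flat R I] :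
    C.TensorExact I := fun n =>
  (LinearMap.exact_iff.mp
    (Module.Flat.lTensor_exact I (LinearMap.exact_iff.mpr (hex n).symm))).symm

private lemma aux_tensorExact {R : Type u} [CommRing R] (C : ModuleComplex R)
    (hflat : ∀ n, Module.Flat R (C.X n)) (hex : C.Exact) :
    ∀ (m : ℕ) (I : Type u) [AddCommGroup I] [Module R I],
      ResDimLE R (fun N _ _ => Module.Flat R N) m I → C.TensorExact I := by
  intro m
  induction m with
  | zero =>
    intro I _ _ hI
    have : Module.Flat R I := hI
    exact flat_tensorExact C hex I
  | succ m ih =>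
    intro I _ _ hI
    obtain ⟨G, _, _, f, hG, hsurj, hker⟩ := hI
    have : Module.Flat R G := hG
    have hKex : C.TensorExact (LinearMap.ker f) := ih _ hker
    have hGex : C.TensorExact G := flat_tensorExact C hex G
    intro n
    apply le_antisymm
    · rintro _ ⟨x, rfl⟩
      simp only [LinearMap.mem_ker]
      exact dd_aux C I n x
    · intro x hx
      simp only [LinearMap.mem_ker] at hx
      obtain ⟨y, hy⟩ := LinearMap.rTensor_surjective (C.X (n + 1)) hsurj x
      have h1 : LinearMap.rTensor (C.X (n + 1 + 1)) f
          (LinearMap.lTensor G (C.d (n + 1)) y) = 0 := by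
        rw [← comm_aux, hy, hx]
      have hrow : Function.Exact
          (LinearMap.rTensor (C.X (n + 1 + 1)) (LinearMap.ker f).subtype)
          (LinearMap.rTensor (C.X (n + 1 + 1)) f) :=
        rTensor_exact _ f.exact_subtype_ker_map hsurj
      obtain ⟨z, hz⟩ := (hrow _).mp h1
      have hinj : Function.Injective
          (LinearMap.rTensor (C.X (n + 1 + 1 + 1)) (LinearMap.ker f).subtype) :=
        Module.Flat.rTensor_preserves_injective_linearMap _ (Submodule.injective_subtype _)
      have hdz : LinearMap.lTensor (LinearMap.ker f) (C.d (n + 1 + 1)) z = 0 := by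
        apply hinj
        rw [map_zero, ← comm_aux, hz]
        exact dd_aux C G (n + 1) y
      have hzmem : z ∈ LinearMap.range (LinearMap.lTensor (LinearMap.ker f) (C.d (n + 1))) := by
        rw [hKex (n + 1)]
        exact hdz
      obtain ⟨w, hw⟩ := hzmem
      have h2 : LinearMap.lTensor G (C.d (n + 1))
          (y - LinearMap.rTensor (C.X (n + 1)) (LinearMap.ker f).subtype w) = 0 := by
        rw [map_sub, comm_aux, hw, hz, sub_self]
      have hmem : y - LinearMap.rTensor (C.X (n + 1)) (LinearMap.ker f).subtype w ∈
          LinearMap.range (LinearMap.lTensor G (C.d n)) := by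
        rw [hGex n]
        exact h2
      obtain ⟨v, hv⟩ := hmem
      refine ⟨LinearMap.rTensor (C.X n) f v, ?_⟩
      have hfi : f.comp (LinearMap.ker f).subtype = 0 := by
        ext ⟨a, ha⟩
        exact ha
      have hfi2 : LinearMap.rTensor (C.X (n + 1)) f
          (LinearMap.rTensor (C.X (n + 1)) (LinearMap.ker f).subtype w) = 0 := by
        rw [← LinearMap.comp_apply, ← LinearMap.rTensor_comp, hfi,
          LinearMap.rTensor_zero, LinearMap.zero_apply]
      rw [comm_aux, hv, map_sub, hy, hfi2, sub_zero]

/-- If every injective module has finite flat dimension, then every complete projective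
resolution is a complete flat resolution: it stays exact after tensoring with injectives. -/
theorem stmt7 (R : Type u) [CommRing R]
    (h : ∀ (I : Type u) [AddCommGroup I] [Module R I], Module.Injective R I → flatDim R I ≠ ⊤) :
    ∀ C : ModuleComplex R, IsCompleteProjectiveResolution R C →
      ∀ (I : Type u) [AddCommGroup I] [Module R I], Module.Injective R I →
        C.TensorExact I := by
  intro C hC I _ _ hI
  obtain ⟨hproj, hex, -⟩ := hC
  have hflat : ∀ n, Module.Flat R (C.X n) := fun n =>
    have := hproj n; Module.Flat.of_projective
  have hne := h I hI
  have hnonempty : {n : ℕ∞ | ∃ m : ℕ, n = m ∧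
      ResDimLE R (fun N _ _ => Module.Flat R N) m I}.Nonempty := by
    by_contra hc
    rw [Set.not_nonempty_iff_eq_empty] at hc
    rw [flatDim, hc, sInf_empty] at hne
    exact hne rfl
  obtain ⟨_, m, rfl, hm⟩ := hnonempty
  exact aux_tensorExact C hflat hex m I hm
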